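/- Let λ = (λ₁,…,λₙ) be a partition of length at most n, with Müntz tableau (λ⁽⁰⁾,…,λ⁽ⁿ⁾) and define φ_j(u₁,…,uₙ) = (f_{λ⁽⁰⁾}(n)/f_{λ⁽ʲ⁾}(n)) · S_{λ⁽ʲ⁾}(u₁,…,uₙ)/S_{λ⁽⁰⁾}(u₁,…,uₙ). Then h_{λ₁+n}(u₁,…,uₙ) = Σ_{j=1}^{n} (−1)^{j+1} (f_{λ⁽ʲ⁾}(n)/f_{λ⁽⁰⁾}(n)) · h_{λ_{j+1}+n−j}(u₁,…,uₙ) · φ_j(u₁,…,uₙ), where λ_{n+1} = 0 and h_m is the complete homogeneous symmetric polynomial of degree m. -/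

import Mathlib

/-- Complete homogeneous symmetric polynomial of degree `m` in `n` real variables. -/
noncomputable def hh (n m : ℕ) (u : Fin n → ℝ) : ℝ :=
  ∑ c ∈ Finset.Nat.antidiagonalTuple n m, ∏ i, u i ^ c i

/-- `hh` extended by `0` to negative degrees. -/
noncomputable def hZ (n : ℕ) (m : ℤ) (u : Fin n → ℝ) : ℝ :=
  if 0 ≤ m then hh n m.toNat u else 0

/-- Schur polynomial of the partition `lam` (of length at most `l`), evaluated at `k`
real variables, defined via the Jacobi–Trudi determinant. -/
noncomputable def schur {l : ℕ} (lam : Fin l → ℕ) {k : ℕ} (u : Fin k → ℝ) : ℝ :=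
  Matrix.det (Matrix.of fun i j : Fin l => hZ k ((lam i : ℤ) - (i : ℤ) + (j : ℤ)) u)

/-- A partition, viewed as a function `ℕ → ℕ` padded by trailing zeros. -/
def padded {m : ℕ} (lam : Fin m → ℕ) : ℕ → ℕ := fun i => if h : i < m then lam ⟨i, h⟩ else 0

/-- The `j`-th partition `λ⁽ʲ⁾` of the Müntz tableau of `λ` (padded with trailing zeros):
`λ⁽ʲ⁾ = (λ₁+1,…,λ_j+1, λ_{j+2},…,λₙ)`. -/
def muntz {m : ℕ} (lam : Fin m → ℕ) (j : ℕ) : Fin m → ℕ :=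
  fun i => if (i : ℕ) < j then padded lam i + 1 else padded lam ((i : ℕ) + 1)

open Finset Matrix Equiv

lemma hh_zero_deg (n : ℕ) (u : Fin n → ℝ) : hh n 0 u = 1 := by
  simp [hh, Finset.Nat.antidiagonalTuple_zero_right]

lemma hh_zero_vars (m : ℕ) (u : Fin 0 → ℝ) : hh 0 m u = if m = 0 then 1 else 0 := by
  cases m with
  | zero => simp [hh, Finset.Nat.antidiagonalTuple_zero_zero]
  | succ m => simp [hh, Finset.Nat.antidiagonalTuple_zero_succ]

lemma hZ_neg {n : ℕ} {m : ℤ} (h : m < 0) (u : Fin n → ℝ) : hZ n m u = 0 := by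
  simp [hZ, not_le.mpr h]

lemma hZ_ofNat {n : ℕ} (m : ℕ) (u : Fin n → ℝ) : hZ n (m : ℤ) u = hh n m u := by
  simp [hZ]

lemma hh_succ (k d : ℕ) (u : Fin (k+1) → ℝ) :
    hh (k+1) d u = ∑ ts ∈ Finset.HasAntidiagonal.antidiagonal d,
      u 0 ^ ts.1 * hh k ts.2 (fun i => u i.succ) := by
  rw [hh]
  have h1 : ∀ ts : ℕ × ℕ, u 0 ^ ts.1 * hh k ts.2 (fun i => u i.succ)
      = ∑ r ∈ Finset.Nat.antidiagonalTuple k ts.2, u 0 ^ ts.1 * ∏ i, u i.succ ^ r i := by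
    intro ts; rw [hh, Finset.mul_sum]
  simp_rw [h1]
  have main : ∑ c ∈ Finset.Nat.antidiagonalTuple (k+1) d, ∏ i, u i ^ c i
      = ∑ x ∈ (Finset.HasAntidiagonal.antidiagonal d).sigma (fun ts => Finset.Nat.antidiagonalTuple k ts.2),
          u 0 ^ x.1.1 * ∏ i : Fin k, u i.succ ^ x.2 i := by
    refine Finset.sum_nbij' (i := fun c => ⟨(c 0, d - c 0), Fin.tail c⟩)
      (j := fun p => Fin.cons p.1.1 p.2) ?_ ?_ ?_ ?_ ?_
    · intro c hc
      rw [Finset.Nat.mem_antidiagonalTuple] at hc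
      have h0 : c 0 + ∑ i : Fin k, c i.succ = d := by rw [← hc, Fin.sum_univ_succ]
      simp only [Finset.mem_sigma, Finset.HasAntidiagonal.mem_antidiagonal, Finset.Nat.mem_antidiagonalTuple]
      constructor
      · omega
      · have : ∑ i, Fin.tail c i = ∑ i : Fin k, c i.succ := rfl
        omega
    · intro p hp
      simp only [Finset.mem_sigma, Finset.HasAntidiagonal.mem_antidiagonal,
        Finset.Nat.mem_antidiagonalTuple] at hp ⊢
      rw [Fin.sum_cons, hp.2, hp.1]
    · intro c _
      exact Fin.cons_self_tail c
    · intro p hp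
      simp only [Finset.mem_sigma, Finset.HasAntidiagonal.mem_antidiagonal,
        Finset.Nat.mem_antidiagonalTuple] at hp
      obtain ⟨⟨a, b⟩, r⟩ := p
      simp only at hp
      simp only [Fin.cons_zero, Fin.tail_cons, Sigma.mk.inj_iff, Prod.mk.injEq, heq_eq_eq,
        true_and, and_true, eq_self_iff_true]
      omega
    · intro c _
      simp only [Fin.cons_zero]
      rw [Fin.prod_univ_succ]
      rfl
  rw [main, Finset.sum_sigma]

noncomputable def Tmat (N : ℕ) (a : ℝ) : Matrix (Fin N) (Fin N) ℝ :=
  Matrix.of fun p q => if (p : ℕ) ≤ (q : ℕ) then a ^ ((q : ℕ) - (p : ℕ)) else 0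

noncomputable def Hmat (k N : ℕ) (u : Fin k → ℝ) : Matrix (Fin N) (Fin N) ℝ :=
  Matrix.of fun p q => hZ k ((q : ℤ) - (p : ℤ)) u

lemma Hmat_succ (k N : ℕ) (u : Fin (k+1) → ℝ) :
    Hmat (k+1) N u = Tmat N (u 0) * Hmat k N (fun i => u i.succ) := by
  ext p q
  rw [Matrix.mul_apply]
  simp only [Hmat, Tmat, Matrix.of_apply]
  set u' : Fin k → ℝ := fun i => u i.succ with hu'
  set g : ℕ → ℝ := fun t => (if (p:ℕ) ≤ t then u 0 ^ (t - (p:ℕ)) else 0) *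
      hZ k ((q:ℤ) - (t:ℤ)) u' with hg
  have step1 : (∑ s : Fin N, (if (p:ℕ) ≤ (s:ℕ) then u 0 ^ ((s:ℕ) - (p:ℕ)) else 0) *
      hZ k ((q:ℤ) - ((s:ℕ):ℤ)) u') = ∑ t ∈ Finset.range N, g t :=
    Fin.sum_univ_eq_sum_range g N
  rw [step1]
  by_cases hpq : (p:ℕ) ≤ (q:ℕ)
  · have hsub : Finset.Ico (p:ℕ) ((q:ℕ)+1) ⊆ Finset.range N := by
      intro x hx
      simp only [Finset.mem_Ico] at hx
      simp only [Finset.mem_range]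
      have := q.isLt
      omega
    rw [← Finset.sum_subset hsub ?van]
    case van =>
      intro x _ hx
      simp only [Finset.mem_Ico, not_and, not_lt] at hx
      by_cases h1 : (p:ℕ) ≤ x
      · have h2 : (q:ℕ) + 1 ≤ x := hx h1
        have : ((q:ℤ) - (x:ℤ)) < 0 := by omega
        simp [hg, hZ_neg this]
      · simp [hg, h1]
    rw [Finset.sum_Ico_eq_sum_range]
    have hLHS : hZ (k+1) ((q:ℤ) - (p:ℤ)) u = hh (k+1) ((q:ℕ) - (p:ℕ)) u := by
      have : ((q:ℤ) - (p:ℤ)) = (((q:ℕ) - (p:ℕ) : ℕ) : ℤ) := by omega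
      rw [this, hZ_ofNat]
    rw [hLHS, hh_succ, Finset.Nat.sum_antidiagonal_eq_sum_range_succ_mk]
    have hrange : (q:ℕ) + 1 - (p:ℕ) = ((q:ℕ) - (p:ℕ)) + 1 := by omega
    rw [hrange]
    refine Finset.sum_congr rfl ?_
    intro i hi
    simp only [Finset.mem_range] at hi
    simp only [hg]
    have h1 : (p:ℕ) ≤ (p:ℕ) + i := Nat.le_add_right _ _
    rw [if_pos h1]
    have h2 : (p:ℕ) + i - (p:ℕ) = i := by omega
    rw [h2]
    have h3 : ((q:ℤ) - (((p:ℕ) + i : ℕ):ℤ)) = (((q:ℕ) - (p:ℕ) - i : ℕ) : ℤ) := by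
      push_cast
      omega
    rw [h3, hZ_ofNat]
  · have hLHS : hZ (k+1) ((q:ℤ) - (p:ℤ)) u = 0 := hZ_neg (by omega) u
    rw [hLHS]
    symm
    refine Finset.sum_eq_zero ?_
    intro t ht
    simp only [hg]
    by_cases h1 : (p:ℕ) ≤ t
    · have : ((q:ℤ) - (t:ℤ)) < 0 := by omega
      rw [hZ_neg this, mul_zero]
    · rw [if_neg h1, zero_mul]


lemma perm_sum_det {l : ℕ} (A B : Matrix (Fin l) (Fin l) ℝ) :
    ∑ τ : Equiv.Perm (Fin l), ∑ σ : Equiv.Perm (Fin l),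
      ((Equiv.Perm.sign σ : ℤ) : ℝ) * ∏ i, A (σ i) (τ i) * B (τ i) i
    = A.det * B.det := by
  have inner : ∀ τ : Equiv.Perm (Fin l),
      ∑ σ : Equiv.Perm (Fin l), ((Equiv.Perm.sign σ : ℤ) : ℝ) * ∏ i, A (σ i) (τ i) * B (τ i) i
      = ((Equiv.Perm.sign τ : ℤ) : ℝ) * A.det * ∏ i, B (τ i) i := by
    intro τ
    have hsplit : ∀ σ : Equiv.Perm (Fin l),
        (∏ i, A (σ i) (τ i) * B (τ i) i) = (∏ i, A (σ i) (τ i)) * ∏ i, B (τ i) i :=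
      fun σ => Finset.prod_mul_distrib
    simp_rw [hsplit, ← mul_assoc]
    rw [← Finset.sum_mul]
    congr 1
    have reind : ∀ σ : Equiv.Perm (Fin l),
        (∏ i, A (σ i) (τ i)) = ∏ j, A (σ (τ⁻¹ j)) j := by
      intro σ
      rw [← Equiv.prod_comp τ (fun j => A (σ (τ⁻¹ j)) j)]
      simp
    simp_rw [reind]
    rw [Matrix.det_apply' A, Finset.mul_sum]
    symm
    refine Fintype.sum_equiv (Equiv.mulRight τ) _ _ ?_
    intro ρ
    simp only [Equiv.coe_mulRight]
    have hptw : ∀ j, (ρ * τ) (τ⁻¹ j) = ρ j := fun j => by simp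
    have hprod : (∏ j, A ((ρ * τ) (τ⁻¹ j)) j) = ∏ j, A (ρ j) j :=
      Finset.prod_congr rfl fun j _ => by rw [hptw]
    rw [hprod, Equiv.Perm.sign_mul]
    push_cast
    ring
  simp_rw [inner]
  rw [Matrix.det_apply' B, Finset.mul_sum]
  refine Finset.sum_congr rfl fun τ _ => by ring

lemma cb_aux {l N : ℕ} (A : Matrix (Fin l) (Fin N) ℝ) (B : Matrix (Fin N) (Fin l) ℝ)
    {p : Fin l → Fin N} (H : ¬Function.Injective p) :
    (∑ σ : Equiv.Perm (Fin l), ((Equiv.Perm.sign σ : ℤ):ℝ) * ∏ x, A (σ x) (p x) * B (p x) x)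
      = 0 := by
  obtain ⟨i, j, hpij, hij⟩ : ∃ i j, p i = p j ∧ i ≠ j := by
    rw [Function.Injective] at H; push_neg at H
    obtain ⟨i, j, h1, h2⟩ := H; exact ⟨i, j, h1, h2⟩
  exact Finset.sum_involution (fun σ _ => σ * Equiv.swap i j)
    (fun σ _ => by
      have : (∏ x, A (σ x) (p x)) = ∏ x, A ((σ * Equiv.swap i j) x) (p x) :=
        Fintype.prod_equiv (Equiv.swap i j) _ _ (by simp [Equiv.apply_swap_eq_self hpij])
      simp [this, Equiv.Perm.sign_swap hij, Finset.prod_mul_distrib])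
    (fun σ _ _ => (not_congr Equiv.mul_swap_eq_iff).mpr hij)
    (fun _ _ => Finset.mem_univ _)
    (fun σ _ => Equiv.mul_swap_involutive i j σ)

lemma cauchy_binet {l N : ℕ} (A : Matrix (Fin l) (Fin N) ℝ) (B : Matrix (Fin N) (Fin l) ℝ) :
    (A * B).det = ∑ f ∈ Finset.univ.filter (fun f : Fin l → Fin N => StrictMono f),
      (A.submatrix id f).det * (B.submatrix f id).det := by
  classical
  have step1 : (A * B).det = ∑ p : Fin l → Fin N, ∑ σ : Equiv.Perm (Fin l),
      ((Equiv.Perm.sign σ : ℤ):ℝ) * ∏ i, A (σ i) (p i) * B (p i) i := by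
    simp only [Matrix.det_apply', Matrix.mul_apply, Finset.prod_univ_sum, Finset.mul_sum,
      Fintype.piFinset_univ]
    rw [Finset.sum_comm]
  rw [step1]
  have step2 : ∑ p : Fin l → Fin N, ∑ σ : Equiv.Perm (Fin l),
      ((Equiv.Perm.sign σ : ℤ):ℝ) * ∏ i, A (σ i) (p i) * B (p i) i
      = ∑ p ∈ Finset.univ.filter (fun p : Fin l → Fin N => Function.Injective p),
        ∑ σ : Equiv.Perm (Fin l),
        ((Equiv.Perm.sign σ : ℤ):ℝ) * ∏ i, A (σ i) (p i) * B (p i) i := by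
    refine (Finset.sum_subset (Finset.filter_subset _ _) fun p _ hp => ?_).symm
    refine cb_aux A B ?_
    simpa using hp
  rw [step2]
  have step3 : ∑ p ∈ Finset.univ.filter (fun p : Fin l → Fin N => Function.Injective p),
      ∑ σ : Equiv.Perm (Fin l),
      ((Equiv.Perm.sign σ : ℤ):ℝ) * ∏ i, A (σ i) (p i) * B (p i) i
      = ∑ x ∈ (Finset.univ.filter (fun f : Fin l → Fin N => StrictMono f)).sigma
          (fun _ => (Finset.univ : Finset (Equiv.Perm (Fin l)))),
        ∑ σ : Equiv.Perm (Fin l),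
        ((Equiv.Perm.sign σ : ℤ):ℝ) * ∏ i, A (σ i) ((x.1 ∘ x.2) i) * B ((x.1 ∘ x.2) i) i := by
    symm
    refine Finset.sum_bij (fun x _ => x.1 ∘ x.2) ?_ ?_ ?_ ?_
    · intro x hx
      simp only [Finset.mem_sigma, Finset.mem_filter, Finset.mem_univ, true_and, and_true] at hx ⊢
      exact hx.injective.comp x.2.injective
    · intro x hx y hy hxy
      simp only [Finset.mem_sigma, Finset.mem_filter, Finset.mem_univ, true_and, and_true] at hx hy
      -- x.1 = y.1 since both strict mono with same image
      have himg : Finset.image (x.1 ∘ x.2) Finset.univ = Finset.image x.1 Finset.univ := by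
        rw [← Finset.image_image]
        congr 1
        exact Finset.image_univ_equiv x.2
      have himg' : Finset.image (y.1 ∘ y.2) Finset.univ = Finset.image y.1 Finset.univ := by
        rw [← Finset.image_image]
        congr 1
        exact Finset.image_univ_equiv y.2
      have hcardx : (Finset.image x.1 Finset.univ).card = l := by
        rw [Finset.card_image_of_injective _ hx.injective, Finset.card_univ, Fintype.card_fin]
      have heq : Finset.image x.1 Finset.univ = Finset.image y.1 Finset.univ := by
        rw [← himg, ← himg', hxy]
      have h1 : x.1 = (Finset.image x.1 Finset.univ).orderEmbOfFin hcardx :=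
        Finset.orderEmbOfFin_unique hcardx (fun i => Finset.mem_image_of_mem _ (Finset.mem_univ i)) hx
      have hcardy : (Finset.image x.1 Finset.univ).card = l := hcardx
      have h2 : y.1 = (Finset.image x.1 Finset.univ).orderEmbOfFin hcardx := by
        refine Finset.orderEmbOfFin_unique hcardx ?_ hy
        intro i
        rw [heq]
        exact Finset.mem_image_of_mem _ (Finset.mem_univ i)
      have hf : x.1 = y.1 := h1.trans h2.symm
      obtain ⟨f, τ⟩ := x; obtain ⟨g, ρ⟩ := y
      simp only at hf hxy ⊢
      subst hf
      have : τ = ρ := Equiv.ext fun i => hx.injective (congrFun hxy i)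
      simp [this]
    · intro p hp
      simp only [Finset.mem_filter, Finset.mem_univ, true_and] at hp
      set s := Finset.image p Finset.univ with hs
      have hcard : s.card = l := by
        rw [hs, Finset.card_image_of_injective _ hp, Finset.card_univ, Fintype.card_fin]
      set f := s.orderEmbOfFin hcard with hf
      have hmem : ∀ i, p i ∈ s := fun i => Finset.mem_image_of_mem _ (Finset.mem_univ i)
      set g : Fin l → Fin l := fun i => (s.orderIsoOfFin hcard).symm ⟨p i, hmem i⟩ with hg
      have hginj : Function.Injective g := by
        intro a b hab
        have h1 := congrArg (fun z => ((s.orderIsoOfFin hcard) z : Fin N)) hab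
        simp only [hg, OrderIso.apply_symm_apply] at h1
        exact hp h1
      have hgbij : Function.Bijective g := (Finite.injective_iff_bijective).mp hginj
      refine ⟨⟨f, Equiv.ofBijective g hgbij⟩, ?_, ?_⟩
      · simp only [Finset.mem_sigma, Finset.mem_filter, Finset.mem_univ, true_and]
        exact ⟨(s.orderEmbOfFin hcard).strictMono, trivial⟩
      · ext i
        simp only [Function.comp_apply, Equiv.ofBijective_apply]
        have : f (g i) = ((s.orderIsoOfFin hcard) (g i) : Fin N) := by
          rw [hf, ← Finset.coe_orderIsoOfFin_apply]
        rw [this, hg]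
        simp
    · intro x hx
      rfl
  rw [step3, Finset.sum_sigma]
  refine Finset.sum_congr rfl fun f hf => ?_
  exact perm_sum_det (A.submatrix id f) (B.submatrix f id)


lemma det_indicator_01 : ∀ {l N : ℕ} (r c : Fin l → Fin N), Monotone r → Monotone c →
    (Matrix.of fun i j : Fin l => if (r i : ℕ) ≤ (c j : ℕ) then (1:ℝ) else 0).det = 0 ∨
    (Matrix.of fun i j : Fin l => if (r i : ℕ) ≤ (c j : ℕ) then (1:ℝ) else 0).det = 1 := by
  intro l
  induction l with
  | zero => intro N r c _ _; right; simp [Matrix.det_fin_zero]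
  | succ n ih =>
    intro N r c hr hc
    by_cases h1 : (r (Fin.last n) : ℕ) ≤ (c (Fin.last n) : ℕ)
    · by_cases h2 : ∃ j : Fin (n+1), j ≠ Fin.last n ∧ (r (Fin.last n) : ℕ) ≤ (c j : ℕ)
      · left
        obtain ⟨j, hjne, hj⟩ := h2
        rw [← Matrix.det_transpose]
        refine Matrix.det_zero_of_row_eq hjne ?_
        funext i
        have hii : (r i : ℕ) ≤ (r (Fin.last n) : ℕ) := hr (Fin.le_last i)
        simp only [Matrix.transpose_apply, Matrix.of_apply]
        rw [if_pos (le_trans hii hj), if_pos (le_trans hii h1)]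
      · push_neg at h2
        rw [Matrix.det_succ_row _ (Fin.last n)]
        rw [Finset.sum_eq_single (Fin.last n)]
        · simp only [Matrix.of_apply, if_pos h1, Fin.succAbove_last, Fin.val_last]
          have hpow : (-1 : ℝ) ^ ((n : ℕ) + (n : ℕ)) = 1 := by
            rw [pow_add]
            rcases neg_one_pow_eq_one_iff_even (R := ℝ) (by norm_num) |>.2 ⟨n, rfl⟩ with h
            rw [← pow_add]
            exact (neg_one_pow_eq_one_iff_even (by norm_num)).2 ⟨n, by ring⟩
          rw [hpow, one_mul, one_mul]
          have hsub : ((Matrix.of fun i j : Fin (n+1) =>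
              if (r i : ℕ) ≤ (c j : ℕ) then (1:ℝ) else 0).submatrix Fin.castSucc Fin.castSucc)
              = Matrix.of (fun i j : Fin n =>
                if ((r (Fin.castSucc i)) : ℕ) ≤ ((c (Fin.castSucc j)) : ℕ) then (1:ℝ) else 0) :=
            rfl
          rw [hsub]
          exact ih (fun i : Fin n => r i.castSucc) (fun j : Fin n => c j.castSucc)
            (fun a b hab => hr (Fin.castSucc_le_castSucc_iff.mpr hab))
            (fun a b hab => hc (Fin.castSucc_le_castSucc_iff.mpr hab))
        · intro j _ hjne
          simp only [Matrix.of_apply, Fin.val_last]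
          rw [if_neg (not_le.mpr (h2 j hjne))]
          ring
        · intro h; exact absurd (Finset.mem_univ _) h
    · left
      refine Matrix.det_eq_zero_of_row_eq_zero (Fin.last n) ?_
      intro j
      simp only [Matrix.of_apply]
      rw [if_neg]
      intro hcon
      exact h1 (le_trans hcon (hc (Fin.le_last j)))

lemma det_eq_indicator_01 : ∀ {l N : ℕ} (r c : Fin l → Fin N), StrictMono r → StrictMono c →
    (Matrix.of fun i j : Fin l => if (r i : ℕ) = (c j : ℕ) then (1:ℝ) else 0).det = 0 ∨
    (Matrix.of fun i j : Fin l => if (r i : ℕ) = (c j : ℕ) then (1:ℝ) else 0).det = 1 := by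
  intro l
  induction l with
  | zero => intro N r c _ _; right; simp [Matrix.det_fin_zero]
  | succ n ih =>
    intro N r c hr hc
    by_cases h1 : ∃ j : Fin (n+1), (r (Fin.last n) : ℕ) = (c j : ℕ)
    · obtain ⟨j0, hj0⟩ := h1
      by_cases hj0l : j0 = Fin.last n
      · subst hj0l
        rw [Matrix.det_succ_row _ (Fin.last n)]
        rw [Finset.sum_eq_single (Fin.last n)]
        · simp only [Matrix.of_apply, if_pos hj0, Fin.succAbove_last, Fin.val_last]
          have hpow : (-1 : ℝ) ^ ((n : ℕ) + (n : ℕ)) = 1 :=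
            (neg_one_pow_eq_one_iff_even (by norm_num)).2 ⟨n, by ring⟩
          rw [hpow, one_mul, one_mul]
          have hsub : ((Matrix.of fun i j : Fin (n+1) =>
              if (r i : ℕ) = (c j : ℕ) then (1:ℝ) else 0).submatrix Fin.castSucc Fin.castSucc)
              = Matrix.of (fun i j : Fin n =>
                if ((r (Fin.castSucc i)) : ℕ) = ((c (Fin.castSucc j)) : ℕ) then (1:ℝ) else 0) :=
            rfl
          rw [hsub]
          exact ih (fun i : Fin n => r i.castSucc) (fun j : Fin n => c j.castSucc)
            (fun a b hab => hr (Fin.castSucc_lt_castSucc_iff.mpr hab))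
            (fun a b hab => hc (Fin.castSucc_lt_castSucc_iff.mpr hab))
        · intro j _ hjne
          simp only [Matrix.of_apply, Fin.val_last]
          rw [if_neg]
          · ring
          · intro hcon
            have : (c j : ℕ) < (c (Fin.last n) : ℕ) :=
              hc (lt_of_le_of_ne (Fin.le_last j) hjne)
            omega
        · intro h; exact absurd (Finset.mem_univ _) h
      · left
        rw [← Matrix.det_transpose]
        refine Matrix.det_eq_zero_of_row_eq_zero (Fin.last n) ?_
        intro i
        simp only [Matrix.transpose_apply, Matrix.of_apply]
        rw [if_neg]
        intro hcon
        have hjlt : (c j0 : ℕ) < (c (Fin.last n) : ℕ) :=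
          hc (lt_of_le_of_ne (Fin.le_last j0) hj0l)
        have hri : (r i : ℕ) ≤ (r (Fin.last n) : ℕ) := hr.monotone (Fin.le_last i)
        omega
    · push_neg at h1
      left
      refine Matrix.det_eq_zero_of_row_eq_zero (Fin.last n) ?_
      intro j
      simp only [Matrix.of_apply]
      rw [if_neg (h1 j)]

lemma tmat_minor_nonneg {l N : ℕ} {a : ℝ} (ha : 0 < a) (r c : Fin l → Fin N)
    (hr : Monotone r) (hc : Monotone c) :
    0 ≤ ((Tmat N a).submatrix r c).det := by
  have key : (Tmat N a).submatrix r c = Matrix.of (fun i j : Fin l =>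
      (a ^ (c j : ℕ)) * (Matrix.of (fun i' j' : Fin l => (a ^ (r i' : ℕ))⁻¹ *
        (Matrix.of (fun i'' j'' : Fin l =>
          if (r i'' : ℕ) ≤ (c j'' : ℕ) then (1:ℝ) else 0)) i' j')) i j) := by
    ext i j
    simp only [Matrix.submatrix_apply, Tmat, Matrix.of_apply]
    by_cases h : (r i : ℕ) ≤ (c j : ℕ)
    · rw [if_pos h, if_pos h, pow_sub₀ a (ne_of_gt ha) h]
      field_simp
    · rw [if_neg h, if_neg h]
      ring
  rw [key, Matrix.det_mul_row, Matrix.det_mul_column]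
  have h01 := det_indicator_01 r c hr hc
  have hp1 : (0:ℝ) ≤ ∏ i, a ^ (c i : ℕ) := Finset.prod_nonneg fun i _ => by positivity
  have hp2 : (0:ℝ) ≤ ∏ i, (a ^ (r i : ℕ))⁻¹ := Finset.prod_nonneg fun i _ => by positivity
  rcases h01 with h | h
  · rw [h]; simp
  · rw [h]; simp; positivity

lemma tmat_minor_triangular {l N : ℕ} (a : ℝ) (r c : Fin l → Fin N)
    (hdiag : ∀ i, (r i : ℕ) ≤ (c i : ℕ))
    (hlow : ∀ i j : Fin l, j < i → (c j : ℕ) < (r i : ℕ)) :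
    ((Tmat N a).submatrix r c).det = ∏ i, a ^ ((c i : ℕ) - (r i : ℕ)) := by
  have htri : ((Tmat N a).submatrix r c).BlockTriangular id := by
    intro i j hij
    simp only [Matrix.submatrix_apply, Tmat, Matrix.of_apply]
    rw [if_neg]
    exact Nat.not_le.mpr (hlow i j hij)
  rw [Matrix.det_of_upperTriangular htri]
  refine Finset.prod_congr rfl fun i _ => ?_
  simp only [Matrix.submatrix_apply, Tmat, Matrix.of_apply]
  rw [if_pos (hdiag i)]

lemma hmat_zero_entry (N : ℕ) (u : Fin 0 → ℝ) (p q : Fin N) :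
    Hmat 0 N u p q = if (p:ℕ) = (q:ℕ) then 1 else 0 := by
  simp only [Hmat, Matrix.of_apply, hZ]
  rcases lt_trichotomy (p:ℕ) (q:ℕ) with h | h | h
  · rw [if_pos (by omega : (0:ℤ) ≤ (q:ℤ)-(p:ℤ)), hh_zero_vars, if_neg (by omega),
      if_neg (by omega)]
  · rw [if_pos (by omega : (0:ℤ) ≤ (q:ℤ)-(p:ℤ)), hh_zero_vars, if_pos (by omega),
      if_pos (by omega)]
  · rw [if_neg (by omega), if_neg (by omega)]

lemma hmat_diag_det (k N l : ℕ) (u : Fin k → ℝ) (C : ℕ) (r c : Fin l → Fin N)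
    (hrv : ∀ i, (r i : ℕ) = C + i) (hcv : ∀ j, (c j : ℕ) = C + j) :
    ((Hmat k N u).submatrix r c).det = 1 := by
  have htri : ((Hmat k N u).submatrix r c).BlockTriangular id := by
    intro i j hij
    simp only [Matrix.submatrix_apply, Hmat, Matrix.of_apply]
    refine hZ_neg ?_ u
    have h1 := hrv i
    have h2 := hcv j
    have : (j : ℕ) < (i : ℕ) := hij
    omega
  rw [Matrix.det_of_upperTriangular htri]
  refine Finset.prod_eq_one fun i _ => ?_
  simp only [Matrix.submatrix_apply, Hmat, Matrix.of_apply]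
  have : ((c i : ℕ) : ℤ) - ((r i : ℕ) : ℤ) = ((0:ℕ):ℤ) := by
    have h1 := hrv i
    have h2 := hcv i
    omega
  rw [this, hZ_ofNat, hh_zero_deg]

lemma hmat_minor_nonneg : ∀ (k : ℕ) {l N : ℕ} (u : Fin k → ℝ), (∀ i, 0 < u i) →
    ∀ (r c : Fin l → Fin N), StrictMono r → StrictMono c →
    0 ≤ ((Hmat k N u).submatrix r c).det := by
  intro k
  induction k with
  | zero =>
    intro l N u hu r c hr hc
    have heq : (Hmat 0 N u).submatrix r c
        = Matrix.of fun i j : Fin l => if ((r i):ℕ) = ((c j):ℕ) then (1:ℝ) else 0 := by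
      ext i j
      exact hmat_zero_entry N u (r i) (c j)
    rw [heq]
    rcases det_eq_indicator_01 r c hr hc with h | h <;> rw [h] <;> norm_num
  | succ k ih =>
    intro l N u hu r c hr hc
    rw [Hmat_succ, Matrix.submatrix_mul _ _ r id c Function.bijective_id, cauchy_binet]
    refine Finset.sum_nonneg ?_
    intro f hf
    simp only [Finset.mem_filter, Finset.mem_univ, true_and] at hf
    have e1 : ((Tmat N (u 0)).submatrix r id).submatrix id f = (Tmat N (u 0)).submatrix r f := rfl
    have e2 : ((Hmat k N (fun i => u i.succ)).submatrix id c).submatrix f id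
        = (Hmat k N (fun i => u i.succ)).submatrix f c := rfl
    rw [e1, e2]
    exact mul_nonneg (tmat_minor_nonneg (hu 0) r f hr.monotone hf.monotone)
      (ih (fun i => u i.succ) (fun i => hu i.succ) f c hf hc)

lemma hmat_det_pos : ∀ (k : ℕ) {l N : ℕ} (u : Fin k → ℝ), (∀ i, 0 < u i) →
    ∀ (C : ℕ) (μ : Fin l → ℕ), Antitone μ → (∀ i, μ i ≤ C) →
    (∀ i : Fin l, k ≤ (i : ℕ) → μ i = 0) →
    ∀ (r c : Fin l → Fin N), (∀ i, (r i : ℕ) = C + i - μ i) → (∀ j, (c j : ℕ) = C + j) →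
    0 < ((Hmat k N u).submatrix r c).det := by
  intro k
  induction k with
  | zero =>
    intro l N u hu C μ hμ hμC hzero r c hrv hcv
    have hall : ∀ i, μ i = 0 := fun i => hzero i (Nat.zero_le _)
    rw [hmat_diag_det 0 N l u C r c (fun i => by rw [hrv i, hall i]; omega) hcv]
    norm_num
  | succ k ih =>
    intro l N u hu C μ hμ hμC hzero r c hrv hcv
    by_cases hall : ∀ i, μ i = 0
    · rw [hmat_diag_det (k+1) N l u C r c (fun i => by rw [hrv i, hall i]; omega) hcv]
      norm_num
    · push_neg at hall
      -- the largest index with nonzero part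
      have hne : (Finset.univ.filter (fun i : Fin l => μ i ≠ 0)).Nonempty := by
        obtain ⟨i, hi⟩ := hall
        exact ⟨i, by simp [hi]⟩
      set i₀ : Fin l := (Finset.univ.filter (fun i : Fin l => μ i ≠ 0)).max' hne with hi₀
      have hi₀ne : μ i₀ ≠ 0 := by
        have := (Finset.univ.filter (fun i : Fin l => μ i ≠ 0)).max'_mem hne
        simpa using this
      have hi₀max : ∀ i : Fin l, i₀ < i → μ i = 0 := by
        intro i hi
        by_contra hcon
        have : i ∈ Finset.univ.filter (fun i : Fin l => μ i ≠ 0) := by simp [hcon]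
        exact absurd (Finset.le_max' _ i this) (not_le.mpr hi)
      have hi₀k : (i₀ : ℕ) < k + 1 := by
        by_contra hcon
        exact hi₀ne (hzero i₀ (by omega))
      set ν : Fin l → ℕ := fun i => if i₀ ≤ i then 0 else μ i with hν
      have hνval : ∀ i, ν i ≤ μ i := by
        intro i; rw [hν]; dsimp only; split <;> omega
      have hνanti : Antitone ν := by
        intro a b hab
        rw [hν]; dsimp only
        by_cases h1 : i₀ ≤ a
        · rw [if_pos h1, if_pos (le_trans h1 hab)]
        · rw [if_neg h1]
          split
          · omega
          · exact hμ hab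
      have hνzero : ∀ i : Fin l, k ≤ (i : ℕ) → ν i = 0 := by
        intro i hik
        rw [hν]; dsimp only
        rw [if_pos]
        rw [Fin.le_def]
        omega
      -- the intermediate index tuple
      set S : Fin l → Fin N := fun i => if i₀ ≤ i then c i else r i with hS
      have hSval : ∀ i, (S i : ℕ) = C + i - ν i := by
        intro i
        rw [hS, hν]; dsimp only
        split
        · rw [hcv i]; omega
        · rw [hrv i]
      have hrmono : StrictMono r := by
        intro a b hab
        rw [Fin.lt_def, hrv a, hrv b]
        have h1 := hμ (le_of_lt hab)
        have h2 := hμC a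
        have h3 : (a:ℕ) < (b:ℕ) := hab
        omega
      have hSmono : StrictMono S := by
        intro a b hab
        rw [Fin.lt_def, hSval a, hSval b]
        have h1 := hνanti (le_of_lt hab)
        have h2 : ν a ≤ C := le_trans (hνval a) (hμC a)
        have h3 : (a:ℕ) < (b:ℕ) := hab
        omega
      have hcmono : StrictMono c := by
        intro a b hab
        rw [Fin.lt_def, hcv a, hcv b]
        have : (a:ℕ) < (b:ℕ) := hab
        omega
      rw [Hmat_succ, Matrix.submatrix_mul _ _ r id c Function.bijective_id, cauchy_binet]
      have hnonneg : ∀ f ∈ Finset.univ.filter (fun f : Fin l → Fin N => StrictMono f),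
          0 ≤ (((Tmat N (u 0)).submatrix r id).submatrix id f).det *
              (((Hmat k N (fun i => u i.succ)).submatrix id c).submatrix f id).det := by
        intro f hf
        simp only [Finset.mem_filter, Finset.mem_univ, true_and] at hf
        have e1 : ((Tmat N (u 0)).submatrix r id).submatrix id f
            = (Tmat N (u 0)).submatrix r f := rfl
        have e2 : ((Hmat k N (fun i => u i.succ)).submatrix id c).submatrix f id
            = (Hmat k N (fun i => u i.succ)).submatrix f c := rfl
        rw [e1, e2]
        exact mul_nonneg (tmat_minor_nonneg (hu 0) r f hrmono.monotone hf.monotone)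
          (hmat_minor_nonneg k (fun i => u i.succ) (fun i => hu i.succ) f c hf hcmono)
      have hmem : S ∈ Finset.univ.filter (fun f : Fin l → Fin N => StrictMono f) := by
        simp only [Finset.mem_filter, Finset.mem_univ, true_and]
        exact hSmono
      have hposS : 0 < (((Tmat N (u 0)).submatrix r id).submatrix id S).det *
          (((Hmat k N (fun i => u i.succ)).submatrix id c).submatrix S id).det := by
        have e1 : ((Tmat N (u 0)).submatrix r id).submatrix id S
            = (Tmat N (u 0)).submatrix r S := rfl
        have e2 : ((Hmat k N (fun i => u i.succ)).submatrix id c).submatrix S id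
            = (Hmat k N (fun i => u i.succ)).submatrix S c := rfl
        rw [e1, e2]
        refine mul_pos ?_ ?_
        · rw [tmat_minor_triangular (u 0) r S ?hdiag ?hlow]
          · exact Finset.prod_pos fun i _ => pow_pos (hu 0) _
          case hdiag =>
            intro i
            rw [hrv i, hSval i]
            have h1 := hνval i
            have h2 := hμC i
            omega
          case hlow =>
            intro i j hji
            rw [hSval j, hrv i]
            have hj : (j:ℕ) < (i:ℕ) := hji
            by_cases h1 : i₀ ≤ j
            · -- then i₀ < i, so μ i = 0; also ν j = 0
              have h2 : μ i = 0 := hi₀max i (lt_of_le_of_lt h1 hji)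
              have h3 : ν j = 0 := by rw [hν]; dsimp only; rw [if_pos h1]
              omega
            · have h3 : ν j = μ j := by rw [hν]; dsimp only; rw [if_neg h1]
              have h4 : μ i ≤ μ j := hμ (le_of_lt hji)
              have h5 := hμC j
              omega
        · refine ih (fun i => u i.succ) (fun i => hu i.succ) C ν hνanti
            (fun i => le_trans (hνval i) (hμC i)) hνzero S c hSval hcv
      calc (0:ℝ) < _ := hposS
        _ ≤ _ := Finset.single_le_sum hnonneg hmem
lemma schur_eq_minor {l k N C : ℕ} (μ : Fin l → ℕ) (u : Fin k → ℝ)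
    (hC : ∀ i, μ i ≤ C)
    (r c : Fin l → Fin N) (hrv : ∀ i, (r i : ℕ) = C + i - μ i) (hcv : ∀ j, (c j : ℕ) = C + j) :
    schur μ u = ((Hmat k N u).submatrix r c).det := by
  unfold schur
  congr 1
  ext i j
  simp only [Matrix.of_apply, Matrix.submatrix_apply, Hmat]
  congr 1
  have h1 := hrv i
  have h2 := hcv j
  have h3 := hC i
  omega

lemma schur_pos {l k : ℕ} (μ : Fin l → ℕ) (hμ : Antitone μ) (hlk : l ≤ k)
    (u : Fin k → ℝ) (hu : ∀ i, 0 < u i) : 0 < schur μ u := by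
  cases l with
  | zero =>
    unfold schur
    rw [show (Matrix.of fun i j : Fin 0 => hZ k ((μ i : ℤ) - (i : ℤ) + (j : ℤ)) u).det = 1
      from Matrix.det_fin_zero]
    norm_num
  | succ n =>
    have hCb : ∀ i : Fin (n+1), μ i ≤ μ 0 := fun i => hμ (Fin.zero_le i)
    have hrb : ∀ i : Fin (n+1), μ 0 + (i:ℕ) - μ i < μ 0 + (n+1) := by
      intro i; have := i.isLt; have := hCb i; omega
    have hcb : ∀ j : Fin (n+1), μ 0 + (j:ℕ) < μ 0 + (n+1) := by
      intro j; have := j.isLt; omega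
    rw [schur_eq_minor (N := μ 0 + (n+1)) μ u hCb
      (fun i => ⟨μ 0 + (i:ℕ) - μ i, hrb i⟩) (fun j => ⟨μ 0 + (j:ℕ), hcb j⟩)
      (fun i => rfl) (fun j => rfl)]
    refine hmat_det_pos k u hu (μ 0) μ hμ hCb ?_ _ _ (fun i => rfl) (fun j => rfl)
    intro i hik
    have := i.isLt
    omega

lemma padded_le {m : ℕ} (lam : Fin m → ℕ) (hlam : Antitone lam) {a b : ℕ} (hab : a ≤ b) :
    padded lam b ≤ padded lam a := by
  unfold padded
  by_cases hb : b < m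
  · rw [dif_pos hb, dif_pos (lt_of_le_of_lt hab hb)]
    exact hlam (by simp [Fin.mk_le_mk, hab])
  · rw [dif_neg hb]
    omega

lemma muntz_antitone {m : ℕ} (lam : Fin (m+1) → ℕ) (hlam : Antitone lam) (j : ℕ) :
    Antitone (muntz lam j) := by
  intro a b hab
  have hab' : (a : ℕ) ≤ (b : ℕ) := hab
  unfold muntz
  by_cases hb : (b : ℕ) < j
  · rw [if_pos hb, if_pos (lt_of_le_of_lt hab' hb)]
    have := padded_le lam hlam hab'
    omega
  · rw [if_neg hb]
    by_cases ha : (a : ℕ) < j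
    · rw [if_pos ha]
      have : padded lam ((b:ℕ)+1) ≤ padded lam (a:ℕ) := padded_le lam hlam (by omega)
      omega
    · rw [if_neg ha]
      exact padded_le lam hlam (by omega)

lemma schur_muntz_zero {m : ℕ} (lam : Fin (m+1) → ℕ) {k : ℕ} (v : Fin k → ℝ) :
    schur (muntz lam 0) v = schur (fun i : Fin m => lam i.succ) v := by
  unfold schur
  rw [Matrix.det_succ_row _ (Fin.last m)]
  rw [Finset.sum_eq_single (Fin.last m)]
  · have hentry : (Matrix.of fun i j : Fin (m+1) =>
        hZ k ((muntz lam 0 i : ℤ) - (i : ℤ) + (j : ℤ)) v) (Fin.last m) (Fin.last m) = 1 := by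
      simp only [Matrix.of_apply]
      have hval : muntz lam 0 (Fin.last m) = 0 := by
        unfold muntz
        rw [if_neg (by omega)]
        unfold padded
        rw [dif_neg (by simp [Fin.val_last])]
      rw [hval]
      have harg : ((0:ℕ) : ℤ) - ((Fin.last m : Fin (m+1)) : ℤ) + ((Fin.last m : Fin (m+1)) : ℤ)
          = ((0:ℕ):ℤ) := by ring
      rw [harg, hZ_ofNat, hh_zero_deg]
    rw [hentry]
    have hsign : (-1 : ℝ) ^ (((Fin.last m : Fin (m+1)) : ℕ) + ((Fin.last m : Fin (m+1)) : ℕ)) = 1 :=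
      (neg_one_pow_eq_one_iff_even (by norm_num)).2 ⟨m, by simp [Fin.val_last]⟩
    rw [hsign, one_mul, one_mul]
    congr 1
    ext s t
    simp only [Matrix.submatrix_apply, Matrix.of_apply, Fin.succAbove_last]
    congr 1
    have hval : muntz lam 0 (Fin.castSucc s) = lam s.succ := by
      unfold muntz
      rw [if_neg (by omega)]
      unfold padded
      rw [dif_pos (by simpa using s.isLt)]
      congr 1
    rw [hval]
    simp [Fin.coe_castSucc]
  · intro j _ hjne
    have hz : (Matrix.of fun i j : Fin (m+1) =>
        hZ k ((muntz lam 0 i : ℤ) - (i : ℤ) + (j : ℤ)) v) (Fin.last m) j = 0 := by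
      simp only [Matrix.of_apply]
      have hval : muntz lam 0 (Fin.last m) = 0 := by
        unfold muntz
        rw [if_neg (by omega)]
        unfold padded
        rw [dif_neg (by simp [Fin.val_last])]
      rw [hval]
      refine hZ_neg ?_ v
      have : (j : ℕ) < m := by
        have := j.isLt
        have : (j : ℕ) ≠ m := fun h => hjne (Fin.ext (by simp [Fin.val_last, h]))
        omega
      simp only [Fin.val_last]
      omega
    rw [hz]
    ring
  · intro h
    exact absurd (Finset.mem_univ _) h

lemma main_det_identity {m : ℕ} (lam : Fin (m+1) → ℕ) (u : Fin (m+1) → ℝ) :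
    (0:ℝ) = ∑ i : Fin (m+2), (-1 : ℝ) ^ (i : ℕ) *
      hh (m+1) (padded lam i + (m+1) - i) u * schur (muntz lam (i : ℕ)) u := by
  set Cm : Matrix (Fin (m+2)) (Fin (m+2)) ℝ := Matrix.of (fun i c =>
    hZ (m+1) ((padded lam (i:ℕ) : ℤ) + 1 - ((i:ℕ):ℤ) + ((min (c:ℕ) m : ℕ):ℤ)) u) with hCm
  have hdet0 : Cm.det = 0 := by
    rw [← Matrix.det_transpose]
    refine Matrix.det_zero_of_row_eq (i := (⟨m, by omega⟩ : Fin (m+2)))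
      (j := Fin.last (m+1)) ?_ ?_
    · intro h
      have := congrArg Fin.val h
      simp [Fin.val_last] at this
    · funext rr
      simp only [Matrix.transpose_apply, hCm, Matrix.of_apply]
      congr 2
      simp [Fin.val_last]
  have hlast : ∀ i : Fin (m+2), Cm i (Fin.last (m+1))
      = hh (m+1) (padded lam (i:ℕ) + (m+1) - (i:ℕ)) u := by
    intro i
    simp only [hCm, Matrix.of_apply]
    have harg : ((padded lam (i:ℕ) : ℤ) + 1 - ((i:ℕ):ℤ)
          + ((min ((Fin.last (m+1) : Fin (m+2)):ℕ) m : ℕ):ℤ))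
        = ((padded lam (i:ℕ) + (m+1) - (i:ℕ) : ℕ) : ℤ) := by
      have h1 : ((Fin.last (m+1) : Fin (m+2)):ℕ) = m+1 := rfl
      have h2 := i.isLt
      rw [h1]
      push_cast
      omega
    rw [harg, hZ_ofNat]
  have hminor : ∀ i : Fin (m+2),
      (Cm.submatrix i.succAbove (Fin.last (m+1)).succAbove).det
        = schur (muntz lam (i:ℕ)) u := by
    intro i
    unfold schur
    congr 1
    ext s t
    simp only [Matrix.submatrix_apply, hCm, Matrix.of_apply, Fin.succAbove_last]
    have hmin : min ((Fin.castSucc t : Fin (m+2)):ℕ) m = (t:ℕ) := by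
      have := t.isLt
      simp only [Fin.coe_castSucc]
      omega
    rw [hmin]
    by_cases hsi : (s:ℕ) < (i:ℕ)
    · have hsa : ((i.succAbove s : Fin (m+2)):ℕ) = (s:ℕ) := by
        rw [Fin.succAbove_of_castSucc_lt _ _ (by rw [Fin.lt_def]; simpa using hsi)]
        simp
      rw [hsa]
      have hmu : muntz lam (i:ℕ) s = padded lam (s:ℕ) + 1 := by
        unfold muntz
        rw [if_pos hsi]
      rw [hmu]
      congr 1
      all_goals push_cast; ring
    · have hsa : ((i.succAbove s : Fin (m+2)):ℕ) = (s:ℕ) + 1 := by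
        rw [Fin.succAbove_of_le_castSucc _ _ (by rw [Fin.le_def]; simpa using not_lt.mp hsi)]
        simp
      rw [hsa]
      have hmu : muntz lam (i:ℕ) s = padded lam ((s:ℕ) + 1) := by
        unfold muntz
        rw [if_neg hsi]
      rw [hmu]
      congr 1
      all_goals push_cast; ring
  have hexp := Matrix.det_succ_column Cm (Fin.last (m+1))
  rw [hdet0] at hexp
  have hsq : ((-1:ℝ)^(m+1)) * ((-1:ℝ)^(m+1)) = 1 := by
    rw [← pow_add]
    exact (neg_one_pow_eq_one_iff_even (by norm_num)).2 ⟨m+1, by ring⟩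
  have hrw : ∑ i : Fin (m+2), (-1 : ℝ) ^ (i : ℕ) *
        hh (m+1) (padded lam i + (m+1) - i) u * schur (muntz lam (i : ℕ)) u
      = (-1:ℝ)^(m+1) * ∑ i : Fin (m+2),
          (-1:ℝ)^((i:ℕ) + ((Fin.last (m+1) : Fin (m+2)):ℕ)) * Cm i (Fin.last (m+1)) *
          (Cm.submatrix i.succAbove (Fin.last (m+1)).succAbove).det := by
    rw [Finset.mul_sum]
    refine Finset.sum_congr rfl fun i _ => ?_
    rw [hlast i, hminor i]
    have hv : ((Fin.last (m+1) : Fin (m+2)):ℕ) = m + 1 := rfl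
    rw [hv]
    have expand : (-1:ℝ)^(m+1) * ((-1:ℝ)^((i:ℕ)+(m+1)) *
          hh (m+1) (padded lam (i:ℕ) + (m+1) - (i:ℕ)) u * schur (muntz lam (i:ℕ)) u)
        = ((-1:ℝ)^(i:ℕ) * hh (m+1) (padded lam (i:ℕ) + (m+1) - (i:ℕ)) u *
            schur (muntz lam (i:ℕ)) u) * ((-1:ℝ)^(m+1) * (-1:ℝ)^(m+1)) := by
      rw [pow_add]
      ring
    rw [expand, hsq, mul_one]
  rw [hrw, ← hexp, mul_zero]

lemma coeff_simp (e h s t a b : ℝ) (ha : a ≠ 0) (hb : b ≠ 0) :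
    e * (a / b) * h * ((b / a) * s / t) = (e * h * s) * t⁻¹ := by
  linear_combination (e*h*s*t⁻¹*(b*b⁻¹)) * mul_inv_cancel₀ ha + (e*h*s*t⁻¹) * mul_inv_cancel₀ hb


/-- Jacobi–Trudi expansion (Proposition 5): with `φ_j = (f_{λ⁽⁰⁾}(n)/f_{λ⁽ʲ⁾}(n)) ·
S_{λ⁽ʲ⁾}/S_{λ⁽⁰⁾}`, one has
`h_{λ₁+n} = Σ_{j=1}^{n} (−1)^{j+1} (f_{λ⁽ʲ⁾}(n)/f_{λ⁽⁰⁾}(n)) · h_{λ_{j+1}+n−j} · φ_j`,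
where `n = m+1`, `λ_{n+1} = 0` and `f_μ(n) = S_μ(1,…,1)` (n ones). -/
theorem jacobi_trudi_blossom_expansion (m : ℕ) (lam : Fin (m + 1) → ℕ) (hlam : Antitone lam)
    (u : Fin (m + 1) → ℝ) (hu : ∀ i, 0 < u i) :
    hh (m + 1) (lam 0 + (m + 1)) u
      = ∑ j ∈ Finset.Icc 1 (m + 1),
          (-1 : ℝ) ^ (j + 1)
          * (schur (muntz lam j) (fun _ : Fin (m + 1) => (1 : ℝ))
              / schur (fun i : Fin m => lam i.succ) (fun _ : Fin (m + 1) => (1 : ℝ)))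
          * hh (m + 1) (padded lam j + (m + 1) - j) u
          * ((schur (fun i : Fin m => lam i.succ) (fun _ : Fin (m + 1) => (1 : ℝ))
                / schur (muntz lam j) (fun _ : Fin (m + 1) => (1 : ℝ)))
              * schur (muntz lam j) u / schur (fun i : Fin m => lam i.succ) u) := by
  
  have hones : ∀ i : Fin (m+1), (0:ℝ) < (fun _ : Fin (m+1) => (1:ℝ)) i := fun i => one_pos
  have hlam0 : Antitone (fun i : Fin m => lam i.succ) := by
    intro a b hab
    refine hlam ?_
    rw [Fin.le_def]
    simpa using hab
  have hS0u : 0 < schur (fun i : Fin m => lam i.succ) u :=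
    schur_pos _ hlam0 (by omega) u hu
  have hF0 : 0 < schur (fun i : Fin m => lam i.succ) (fun _ : Fin (m+1) => (1:ℝ)) :=
    schur_pos _ hlam0 (by omega) _ hones
  have hFj : ∀ j : ℕ, 0 < schur (muntz lam j) (fun _ : Fin (m+1) => (1:ℝ)) :=
    fun j => schur_pos _ (muntz_antitone lam hlam j) (le_refl _) _ hones
  have hmain := main_det_identity lam u
  rw [Fin.sum_univ_succ] at hmain
  -- the 0 term
  have h0t : (-1 : ℝ) ^ (((0 : Fin (m+2))) : ℕ) *
      hh (m+1) (padded lam (((0 : Fin (m+2))) : ℕ) + (m+1) - (((0 : Fin (m+2))) : ℕ)) u *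
      schur (muntz lam (((0 : Fin (m+2))) : ℕ)) u
      = hh (m+1) (lam 0 + (m+1)) u * schur (fun i : Fin m => lam i.succ) u := by
    have h1 : (((0 : Fin (m+2))) : ℕ) = 0 := rfl
    rw [h1, pow_zero, one_mul, schur_muntz_zero lam u]
    congr 2
  rw [h0t] at hmain
  -- identity I
  have hI : hh (m+1) (lam 0 + (m+1)) u * schur (fun i : Fin m => lam i.succ) u
      = ∑ j ∈ Finset.Icc 1 (m+1), ((-1:ℝ)^(j+1) * hh (m+1) (padded lam j + (m+1) - j) u *
          schur (muntz lam j) u) := by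
    have hIcc : Finset.Icc 1 (m+1) = Finset.Ico 1 (m+2) := by
      rw [← Finset.Ico_add_one_right_eq_Icc]
      rfl
    rw [hIcc, Finset.sum_Ico_eq_sum_range]
    have hrange : (∑ i ∈ Finset.range (m+2-1), ((-1:ℝ)^((1+i)+1) *
          hh (m+1) (padded lam (1+i) + (m+1) - (1+i)) u * schur (muntz lam (1+i)) u))
        = ∑ i : Fin (m+1), ((-1:ℝ)^((1+(i:ℕ))+1) *
          hh (m+1) (padded lam (1+(i:ℕ)) + (m+1) - (1+(i:ℕ))) u *
          schur (muntz lam (1+(i:ℕ))) u) :=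
      (Fin.sum_univ_eq_sum_range (fun i => ((-1:ℝ)^((1+i)+1) *
          hh (m+1) (padded lam (1+i) + (m+1) - (1+i)) u * schur (muntz lam (1+i)) u)) (m+1)).symm
    rw [hrange]
    have hterm : ∀ i : Fin (m+1), ((-1:ℝ)^((1+(i:ℕ))+1) *
          hh (m+1) (padded lam (1+(i:ℕ)) + (m+1) - (1+(i:ℕ))) u *
          schur (muntz lam (1+(i:ℕ))) u)
        = -((-1 : ℝ) ^ ((i.succ : Fin (m+2)) : ℕ) *
          hh (m+1) (padded lam (((i.succ : Fin (m+2))) : ℕ) + (m+1) - (((i.succ : Fin (m+2))) : ℕ)) u *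
          schur (muntz lam (((i.succ : Fin (m+2))) : ℕ)) u) := by
      intro i
      have hv : (((i.succ : Fin (m+2))) : ℕ) = 1 + (i:ℕ) := by
        rw [Fin.val_succ]
        omega
      rw [hv]
      have hp : ((-1:ℝ)^((1+(i:ℕ))+1)) = -((-1:ℝ)^(1+(i:ℕ))) := by
        rw [pow_succ]
        ring
      rw [hp]
      ring
    rw [Finset.sum_congr rfl (fun i _ => hterm i), Finset.sum_neg_distrib]
    linarith [hmain]
  -- final computation
  calc hh (m + 1) (lam 0 + (m + 1)) u
      = (hh (m+1) (lam 0 + (m+1)) u * schur (fun i : Fin m => lam i.succ) u) *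
        (schur (fun i : Fin m => lam i.succ) u)⁻¹ := by
        rw [mul_inv_cancel_right₀ (ne_of_gt hS0u)]
    _ = (∑ j ∈ Finset.Icc 1 (m+1), ((-1:ℝ)^(j+1) * hh (m+1) (padded lam j + (m+1) - j) u *
          schur (muntz lam j) u)) * (schur (fun i : Fin m => lam i.succ) u)⁻¹ := by rw [hI]
    _ = ∑ j ∈ Finset.Icc 1 (m+1), (((-1:ℝ)^(j+1) * hh (m+1) (padded lam j + (m+1) - j) u *
          schur (muntz lam j) u) * (schur (fun i : Fin m => lam i.succ) u)⁻¹) :=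
        Finset.sum_mul _ _ _
    _ = _ := by
        refine Finset.sum_congr rfl fun j _ => ?_
        exact (coeff_simp _ _ _ _ _ _ (ne_of_gt (hFj j)) (ne_of_gt hF0)).symm
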